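/- The box distance between geometric data sets satisfies the triangle inequality: for all geometric data sets X, Y, Z, we have □(X,Z) ≤ □(X,Y) + □(Y,Z). Together with symmetry, nonnegativity, and non-degeneracy, □ is a metric on the set of isomorphism classes of geometric data sets. -/

import Mathlib

open MeasureTheory Topology Filter ENNReal

noncomputable section

/-- The Ky Fan (extended) pseudometric between two maps, w.r.t. a measure `π`:
`inf {ε ≥ 0 | π {ω | d (u ω) (v ω) > ε} ≤ ε}`. -/
def kyFan {Ω E : Type*} [MeasurableSpace Ω] [PseudoEMetricSpace E]
    (π : Measure Ω) (u v : Ω → E) : ℝ≥0∞ :=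
  sInf {ε : ℝ≥0∞ | π {ω | ε < edist (u ω) (v ω)} ≤ ε}

/-- Hausdorff distance between two sets w.r.t. an abstract extended pseudometric `d`. -/
def hausd {α : Type*} (d : α → α → ℝ≥0∞) (A B : Set α) : ℝ≥0∞ :=
  max (⨆ a : A, ⨅ b : B, d a b) (⨆ b : B, ⨅ a : A, d a b)

/-- The sup (extended) pseudometric `d∞^A` over a subset `A`. -/
def dInfty {α β : Type*} [PseudoEMetricSpace β] (A : Set α) (u v : α → β) : ℝ≥0∞ :=
  ⨆ a : A, edist (u a) (v a)

/-- A geometric data set: a complete separable metric space whose distance is the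
supremum of feature differences over a nonempty family `F` of real-valued functions,
equipped with a fully supported Borel probability measure. -/
structure GDS where
  carrier : Type
  met : MetricSpace carrier
  cms : CompleteSpace carrier
  sep : TopologicalSpace.SeparableSpace carrier
  msp : MeasurableSpace carrier
  bor : BorelSpace carrier
  F : Set (carrier → ℝ)
  F_nonempty : F.Nonempty
  dist_isLUB : ∀ x y : carrier, IsLUB ((fun f => |f x - f y|) '' F) (dist x y)
  μ : Measure carrier
  prob : IsProbabilityMeasure μ
  full_support : ∀ U : Set carrier, IsOpen U → U.Nonempty → 0 < μ U

attribute [instance] GDS.met GDS.cms GDS.sep GDS.msp GDS.bor GDS.prob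

/-- A coupling of the measures of two geometric data sets. -/
def GDS.Coupling (X Y : GDS) (π : Measure (X.carrier × Y.carrier)) : Prop :=
  IsProbabilityMeasure π ∧ π.map Prod.fst = X.μ ∧ π.map Prod.snd = Y.μ

/-- A parameter of a measure `μ`: a Borel measurable map from `[0,1]` (with Lebesgue
measure) pushing the Lebesgue measure forward to `μ`. -/
def IsParam {X : Type*} [MeasurableSpace X] (μ : Measure X)
    (φ : Set.Icc (0:ℝ) 1 → X) : Prop :=
  Measurable φ ∧ Measure.map φ volume = μ

/-- The observable distance between two geometric data sets. -/
def dConc (X Y : GDS) : ℝ≥0∞ :=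
  ⨅ (φ : Set.Icc (0:ℝ) 1 → X.carrier) (_ : IsParam X.μ φ)
    (ψ : Set.Icc (0:ℝ) 1 → Y.carrier) (_ : IsParam Y.μ ψ),
    hausd (kyFan (volume : Measure (Set.Icc (0:ℝ) 1)))
      ((· ∘ φ) '' X.F) ((· ∘ ψ) '' Y.F)

/-- `d_conc^π`, the Hausdorff distance w.r.t. the Ky Fan metric of a coupling `π`. -/
def dConcCoupling (X Y : GDS) (π : Measure (X.carrier × Y.carrier)) : ℝ≥0∞ :=
  hausd (kyFan π) ((· ∘ Prod.fst) '' X.F) ((· ∘ Prod.snd) '' Y.F)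

/-- The Prohorov distance between two Borel measures. -/
def prohorov {Z : Type*} [PseudoEMetricSpace Z] [MeasurableSpace Z]
    (μ ν : Measure Z) : ℝ≥0∞ :=
  sInf {ε : ℝ≥0∞ | ∀ A : Set Z, MeasurableSet A →
    ν A ≤ μ {z | EMetric.infEdist z A < ε} + ε}

/-- The `a`-partial diameter of a Borel measure on `ℝ`. -/
def partialDiam (ν : Measure ℝ) (a : ℝ≥0∞) : ℝ≥0∞ :=
  ⨅ (I : Set ℝ) (_ : MeasurableSet I) (_ : a ≤ ν I), EMetric.diam I

/-- The `κ`-observable diameter `ObsDiam(X; -κ)` of a geometric data set. -/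
def obsDiam (X : GDS) (κ : ℝ) : ℝ≥0∞ :=
  ⨆ f : X.F, partialDiam (X.μ.map f) (ENNReal.ofReal (1 - κ))

/-- The distortion of a subset `S ⊆ X × Y`. -/
def distortion {X Y : Type*} [PseudoMetricSpace X] [PseudoMetricSpace Y]
    (S : Set (X × Y)) : ℝ≥0∞ :=
  ⨆ (p : S) (q : S), edist (dist p.1.1 q.1.1) (dist p.1.2 q.1.2)

/-- `□_π^S(F, G) = max {1 - π S, 2 H_{d∞^S}(F ∘ pr₁, G ∘ pr₂)}`. -/
def boxS (X Y : GDS) (π : Measure (X.carrier × Y.carrier))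
    (S : Set (X.carrier × Y.carrier))
    (F : Set (X.carrier → ℝ)) (G : Set (Y.carrier → ℝ)) : ℝ≥0∞ :=
  max (1 - π S) (2 * hausd (dInfty S) ((· ∘ Prod.fst) '' F) ((· ∘ Prod.snd) '' G))

/-- `□_π(F, G)`, infimum of `□_π^S(F, G)` over closed `S`. -/
def boxCoupling (X Y : GDS) (π : Measure (X.carrier × Y.carrier))
    (F : Set (X.carrier → ℝ)) (G : Set (Y.carrier → ℝ)) : ℝ≥0∞ :=
  ⨅ (S : Set (X.carrier × Y.carrier)) (_ : IsClosed S), boxS X Y π S F G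

/-- The box distance between two geometric data sets. -/
def boxDist (X Y : GDS) : ℝ≥0∞ :=
  ⨅ (π : Measure (X.carrier × Y.carrier)) (_ : X.Coupling Y π),
    boxCoupling X Y π X.F Y.F

/-- The distortion `dis π` of a coupling `π`. -/
def disCoupling (X Y : GDS) (π : Measure (X.carrier × Y.carrier)) : ℝ≥0∞ :=
  ⨅ (S : Set (X.carrier × Y.carrier)) (_ : IsClosed S), max (1 - π S) (distortion S)

/-- `X ⪯ Y` : the geometric data set `Y` dominates `X` (feature order). -/
def GDS.Dominates (Y X : GDS) : Prop :=
  ∃ p : Y.carrier → X.carrier, Measurable p ∧ Y.μ.map p = X.μ ∧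
    (· ∘ p) '' X.F ⊆ closure Y.F


section Aux

open ProbabilityTheory Set

/-- A geometric data set has nonempty carrier. -/
lemma GDS.nonempty (X : GDS) : Nonempty X.carrier := by
  by_contra h
  rw [not_nonempty_iff] at h
  have h1 : X.μ Set.univ = 1 := measure_univ
  rw [Set.univ_eq_empty_iff.2 h, measure_empty] at h1
  exact zero_ne_one h1

/-- Every feature of a geometric data set is `1`-Lipschitz. -/
lemma GDS.lip (X : GDS) {f : X.carrier → ℝ} (hf : f ∈ X.F) (x y : X.carrier) :
    edist (f x) (f y) ≤ edist x y := by
  have h : |f x - f y| ≤ dist x y :=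
    (X.dist_isLUB x y).1 (Set.mem_image_of_mem _ hf)
  rw [edist_dist, edist_dist, Real.dist_eq]
  exact ENNReal.ofReal_le_ofReal h

lemma GDS.continuous_of_mem (X : GDS) {f : X.carrier → ℝ} (hf : f ∈ X.F) :
    Continuous f :=
  (LipschitzWith.of_edist_le (X.lip hf)).continuous

/-- One-sided Hausdorff-type triangle-ish estimate. -/
lemma oneside {α β γ : Type*} (A : Set α) (B : Set β) (C : Set γ)
    (d₁ : α → β → ℝ≥0∞) (d₂ : β → γ → ℝ≥0∞) (d₃ : α → γ → ℝ≥0∞)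
    (htri : ∀ a ∈ A, ∀ b ∈ B, ∀ c ∈ C, d₃ a c ≤ d₁ a b + d₂ b c) :
    (⨆ a : A, ⨅ c : C, d₃ a c) ≤
      (⨆ a : A, ⨅ b : B, d₁ a b) + (⨆ b : B, ⨅ c : C, d₂ b c) := by
  set s₂ : ℝ≥0∞ := ⨆ b : B, ⨅ c : C, d₂ b c with hs₂
  refine iSup_le fun a => ?_
  have h1 : (⨅ b : B, d₁ (a : α) b) ≤ ⨆ a : A, ⨅ b : B, d₁ (a : α) b :=
    le_iSup (fun a : A => ⨅ b : B, d₁ (a : α) (b : β)) a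
  refine le_trans ?_ (add_le_add_left h1 s₂)
  rw [ENNReal.iInf_add]
  refine le_iInf fun b => ?_
  have h2 : (⨅ c : C, d₂ (b : β) c) ≤ s₂ := le_iSup (fun b : B => ⨅ c : C, d₂ (b : β) c) b
  refine le_trans ?_ (add_le_add_right h2 _)
  rw [ENNReal.add_iInf]
  refine le_iInf fun c => ?_
  exact iInf_le_of_le c (htri a a.2 b b.2 c c.2)

/-- Hausdorff-type triangle estimate, abstract form. -/
lemma hausd_tri {α β γ : Type*} (A : Set α) (B : Set β) (C : Set γ)
    (d₁ : α → β → ℝ≥0∞) (d₂ : β → γ → ℝ≥0∞) (d₃ : α → γ → ℝ≥0∞)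
    (htri : ∀ a ∈ A, ∀ b ∈ B, ∀ c ∈ C, d₃ a c ≤ d₁ a b + d₂ b c) :
    max (⨆ a : A, ⨅ c : C, d₃ a c) (⨆ c : C, ⨅ a : A, d₃ a c) ≤
      max (⨆ a : A, ⨅ b : B, d₁ a b) (⨆ b : B, ⨅ a : A, d₁ a b) +
      max (⨆ b : B, ⨅ c : C, d₂ b c) (⨆ c : C, ⨅ b : B, d₂ b c) := by
  refine max_le ?_ ?_
  · exact le_trans (oneside A B C d₁ d₂ d₃ htri)
      (add_le_add (le_max_left _ _) (le_max_left _ _))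
  · have h := oneside C B A (fun c b => d₂ b c) (fun b a => d₁ a b) (fun c a => d₃ a c)
      (fun c hc b hb a ha => le_trans (htri a ha b hb c hc) (le_of_eq (add_comm _ _)))
    exact le_trans h (by rw [add_comm]; exact add_le_add (le_max_right _ _) (le_max_right _ _))

lemma iSup_image_subtype {α γ : Type*} (m : α → γ) (A : Set α) (g : γ → ℝ≥0∞) :
    (⨆ x : (m '' A), g x) = ⨆ a : A, g (m a) := by
  refine le_antisymm (iSup_le ?_) (iSup_le ?_)
  · rintro ⟨x, a, ha, rfl⟩
    exact le_iSup (fun a : A => g (m (a : α))) ⟨a, ha⟩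
  · rintro ⟨a, ha⟩
    exact le_iSup (fun x : (m '' A) => g x) ⟨m a, Set.mem_image_of_mem _ ha⟩

lemma iInf_image_subtype {α γ : Type*} (m : α → γ) (A : Set α) (g : γ → ℝ≥0∞) :
    (⨅ x : (m '' A), g x) = ⨅ a : A, g (m a) := by
  refine le_antisymm (le_iInf ?_) (le_iInf ?_)
  · rintro ⟨a, ha⟩
    exact iInf_le (fun x : (m '' A) => g x) ⟨m a, Set.mem_image_of_mem _ ha⟩
  · rintro ⟨x, a, ha, rfl⟩
    exact iInf_le (fun a : A => g (m (a : α))) ⟨a, ha⟩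

/-- `hausd` of images, rewritten as sup-infs over the original families. -/
lemma hausd_image {α β γ : Type*} (d : γ → γ → ℝ≥0∞) (m₁ : α → γ) (m₂ : β → γ)
    (A : Set α) (B : Set β) :
    hausd d (m₁ '' A) (m₂ '' B) =
      max (⨆ a : A, ⨅ b : B, d (m₁ a) (m₂ b)) (⨆ b : B, ⨅ a : A, d (m₁ a) (m₂ b)) := by
  rw [hausd]
  congr 1
  · rw [iSup_image_subtype m₁ A (fun x => ⨅ b : (m₂ '' B), d x b)]
    exact iSup_congr fun a => iInf_image_subtype m₂ B (fun y => d (m₁ a) y)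
  · rw [iSup_image_subtype m₂ B (fun y => ⨅ a : (m₁ '' A), d a y)]
    exact iSup_congr fun b => iInf_image_subtype m₁ A (fun x => d x (m₂ b))

/-- The key composition estimate for `dInfty` over the closure of the composed set. -/
lemma dInfty_comp (X Y Z : GDS) (S₁ : Set (X.carrier × Y.carrier))
    (S₂ : Set (Y.carrier × Z.carrier))
    {f : X.carrier → ℝ} {g : Y.carrier → ℝ} {h : Z.carrier → ℝ}
    (hf : f ∈ X.F) (hg : g ∈ Y.F) (hh : h ∈ Z.F) :
    dInfty (closure {q : X.carrier × Z.carrier |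
        ∃ y, (q.1, y) ∈ S₁ ∧ (y, q.2) ∈ S₂}) (f ∘ Prod.fst) (h ∘ Prod.snd) ≤
      dInfty S₁ (f ∘ Prod.fst) (g ∘ Prod.snd) + dInfty S₂ (g ∘ Prod.fst) (h ∘ Prod.snd) := by
  set c := dInfty S₁ (f ∘ Prod.fst) (g ∘ Prod.snd) + dInfty S₂ (g ∘ Prod.fst) (h ∘ Prod.snd)
    with hc
  have hcont : Continuous fun q : X.carrier × Z.carrier => edist (f q.1) (h q.2) :=
    Continuous.edist ((X.continuous_of_mem hf).comp continuous_fst)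
      ((Z.continuous_of_mem hh).comp continuous_snd)
  have hclosed : IsClosed {q : X.carrier × Z.carrier | edist (f q.1) (h q.2) ≤ c} :=
    isClosed_le hcont continuous_const
  have hsub : closure {q : X.carrier × Z.carrier | ∃ y, (q.1, y) ∈ S₁ ∧ (y, q.2) ∈ S₂} ⊆
      {q : X.carrier × Z.carrier | edist (f q.1) (h q.2) ≤ c} := by
    refine closure_minimal ?_ hclosed
    rintro ⟨x, z⟩ ⟨y, hy1, hy2⟩
    refine le_trans (edist_triangle (f x) (g y) (h z)) (add_le_add ?_ ?_)
    · exact le_iSup (fun a : S₁ => edist ((f ∘ Prod.fst) (a : X.carrier × Y.carrier))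
        ((g ∘ Prod.snd) (a : X.carrier × Y.carrier))) ⟨(x, y), hy1⟩
    · exact le_iSup (fun a : S₂ => edist ((g ∘ Prod.fst) (a : Y.carrier × Z.carrier))
        ((h ∘ Prod.snd) (a : Y.carrier × Z.carrier))) ⟨(y, z), hy2⟩
  exact iSup_le fun a => hsub a.2

/-- The key gluing lemma. -/
lemma glue_le (X Y Z : GDS) (π₁ : Measure (X.carrier × Y.carrier))
    (π₂ : Measure (Y.carrier × Z.carrier))
    (h₁ : X.Coupling Y π₁) (h₂ : Y.Coupling Z π₂) :
    boxDist X Z ≤ boxCoupling X Y π₁ X.F Y.F + boxCoupling Y Z π₂ Y.F Z.F := by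
  haveI hp₁ : IsProbabilityMeasure π₁ := h₁.1
  haveI hp₂ : IsProbabilityMeasure π₂ := h₂.1
  haveI := X.nonempty
  haveI := Y.nonempty
  haveI := Z.nonempty
  -- the swapped measure and disintegrations
  set ρ₁ : Measure (Y.carrier × X.carrier) := π₁.map Prod.swap with hρ₁def
  haveI : IsProbabilityMeasure ρ₁ :=
    Measure.isProbabilityMeasure_map measurable_swap.aemeasurable
  set κ₁ := ρ₁.condKernel with hκ₁def
  set κ₂ := π₂.condKernel with hκ₂def
  have hfst₁ : ρ₁.fst = Y.μ := by
    rw [hρ₁def, Measure.fst_map_swap]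
    exact h₂.2.1 ▸ h₁.2.2
  have hsnd₁ : ρ₁.snd = X.μ := by
    rw [hρ₁def, Measure.snd_map_swap]
    exact h₁.2.1
  have hdis₁ : Y.μ ⊗ₘ κ₁ = ρ₁ := by
    rw [← hfst₁]; exact ρ₁.disintegrate κ₁
  have hfst₂ : π₂.fst = Y.μ := h₂.2.1
  have hdis₂ : Y.μ ⊗ₘ κ₂ = π₂ := by
    rw [← hfst₂]; exact π₂.disintegrate κ₂
  -- the glued measure
  set μ₃ : Measure (Y.carrier × (X.carrier × Z.carrier)) :=
    Y.μ ⊗ₘ (κ₁ ×ₖ κ₂) with hμ₃def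
  haveI : IsProbabilityMeasure μ₃ := by rw [hμ₃def]; infer_instance
  -- two projection computations
  have measA : ∀ W : Set (Y.carrier × X.carrier), MeasurableSet W →
      μ₃ {p : Y.carrier × (X.carrier × Z.carrier) | (p.1, p.2.1) ∈ W} = ρ₁ W := by
    intro W hW
    rw [← hdis₁, hμ₃def]
    have hset : MeasurableSet {p : Y.carrier × (X.carrier × Z.carrier) | (p.1, p.2.1) ∈ W} :=
      (measurable_fst.prodMk (measurable_fst.comp measurable_snd)) hW
    rw [Measure.compProd_apply hset, Measure.compProd_apply hW]
    refine lintegral_congr fun y => ?_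
    have hpre : Prod.mk y ⁻¹' {p : Y.carrier × (X.carrier × Z.carrier) | (p.1, p.2.1) ∈ W} =
        (Prod.mk y ⁻¹' W) ×ˢ (Set.univ : Set Z.carrier) := by
      ext q; simp [Set.mem_prod]
    rw [hpre, Kernel.prod_apply, Measure.prod_prod, measure_univ, mul_one]
  have measB : ∀ W : Set (Y.carrier × Z.carrier), MeasurableSet W →
      μ₃ {p : Y.carrier × (X.carrier × Z.carrier) | (p.1, p.2.2) ∈ W} = π₂ W := by
    intro W hW
    rw [← hdis₂, hμ₃def]
    have hset : MeasurableSet {p : Y.carrier × (X.carrier × Z.carrier) | (p.1, p.2.2) ∈ W} :=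
      (measurable_fst.prodMk (measurable_snd.comp measurable_snd)) hW
    rw [Measure.compProd_apply hset, Measure.compProd_apply hW]
    refine lintegral_congr fun y => ?_
    have hpre : Prod.mk y ⁻¹' {p : Y.carrier × (X.carrier × Z.carrier) | (p.1, p.2.2) ∈ W} =
        (Set.univ : Set X.carrier) ×ˢ (Prod.mk y ⁻¹' W) := by
      ext q; simp [Set.mem_prod]
    rw [hpre, Kernel.prod_apply, Measure.prod_prod, measure_univ, one_mul]
  -- the glued coupling
  set π : Measure (X.carrier × Z.carrier) := μ₃.map Prod.snd with hπdef
  haveI : IsProbabilityMeasure π :=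
    Measure.isProbabilityMeasure_map measurable_snd.aemeasurable
  have hπ_apply : ∀ s : Set (X.carrier × Z.carrier), MeasurableSet s →
      π s = μ₃ (Prod.snd ⁻¹' s) := fun s hs => Measure.map_apply measurable_snd hs
  have hcoup : X.Coupling Z π := by
    refine ⟨inferInstance, ?_, ?_⟩
    · ext s hs
      rw [Measure.map_apply measurable_fst hs, hπ_apply _ (measurable_fst hs)]
      have : Prod.snd ⁻¹' (Prod.fst ⁻¹' s) =
          {p : Y.carrier × (X.carrier × Z.carrier) | (p.1, p.2.1) ∈ Prod.snd ⁻¹' s} := rfl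
      rw [this, measA _ (measurable_snd hs), ← Measure.snd_apply hs, hsnd₁]
    · ext s hs
      rw [Measure.map_apply measurable_snd hs, hπ_apply _ (measurable_snd hs)]
      have : Prod.snd ⁻¹' (Prod.snd ⁻¹' s) =
          {p : Y.carrier × (X.carrier × Z.carrier) | (p.1, p.2.2) ∈ Prod.snd ⁻¹' s} := rfl
      rw [this, measB _ (measurable_snd hs), ← Measure.map_apply measurable_snd hs, h₂.2.2]
  refine le_trans (iInf₂_le π hcoup) ?_
  -- reduce to fixed closed sets S₁, S₂
  simp only [boxCoupling]
  rw [ENNReal.iInf_add]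
  refine le_iInf fun S₁ => ?_
  rw [ENNReal.iInf_add]
  refine le_iInf fun hS₁ => ?_
  rw [ENNReal.add_iInf]
  refine le_iInf fun S₂ => ?_
  rw [ENNReal.add_iInf]
  refine le_iInf fun hS₂ => ?_
  -- the composed closed set
  set S : Set (X.carrier × Z.carrier) :=
    closure {q : X.carrier × Z.carrier | ∃ y, (q.1, y) ∈ S₁ ∧ (y, q.2) ∈ S₂} with hSdef
  refine le_trans (iInf₂_le S isClosed_closure) ?_
  rw [boxS, boxS, boxS]
  -- measure part
  have hmeas_part : 1 - π S ≤ (1 - π₁ S₁) + (1 - π₂ S₂) := by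
    rw [← prob_compl_eq_one_sub hS₁.measurableSet, ← prob_compl_eq_one_sub hS₂.measurableSet]
    rw [tsub_le_iff_right]
    set W₁ : Set (Y.carrier × X.carrier) := Prod.swap ⁻¹' S₁ with hW₁def
    have hW₁ : MeasurableSet W₁ := measurable_swap hS₁.measurableSet
    set T : Set (Y.carrier × (X.carrier × Z.carrier)) :=
      {p | (p.1, p.2.1) ∈ W₁ ∧ (p.1, p.2.2) ∈ S₂} with hTdef
    have hT : MeasurableSet T := by
      refine MeasurableSet.inter ?_ ?_
      · exact (measurable_fst.prodMk (measurable_fst.comp measurable_snd)) hW₁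
      · exact (measurable_fst.prodMk (measurable_snd.comp measurable_snd)) hS₂.measurableSet
    have hTS : T ⊆ Prod.snd ⁻¹' S := by
      rintro p ⟨hp1, hp2⟩
      exact subset_closure ⟨p.1, hp1, hp2⟩
    have hTc : μ₃ Tᶜ ≤ π₁ S₁ᶜ + π₂ S₂ᶜ := by
      have hunion : Tᶜ ⊆ {p : Y.carrier × (X.carrier × Z.carrier) | (p.1, p.2.1) ∈ W₁ᶜ} ∪
          {p : Y.carrier × (X.carrier × Z.carrier) | (p.1, p.2.2) ∈ S₂ᶜ} := by
        intro p hp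
        rw [hTdef] at hp
        simp only [Set.mem_compl_iff, Set.mem_setOf_eq, not_and_or] at hp
        rcases hp with hp | hp
        · exact Or.inl hp
        · exact Or.inr hp
      refine le_trans (measure_mono hunion) (le_trans (measure_union_le _ _) ?_)
      rw [measA _ hW₁.compl, measB _ hS₂.measurableSet.compl]
      have : ρ₁ W₁ᶜ = π₁ S₁ᶜ := by
        rw [hρ₁def, Measure.map_apply measurable_swap hW₁.compl]
        congr 1
      rw [this]
    have h1 : (1 : ℝ≥0∞) = μ₃ T + μ₃ Tᶜ := by
      rw [measure_add_measure_compl hT, measure_univ]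
    calc (1 : ℝ≥0∞) = μ₃ T + μ₃ Tᶜ := h1
      _ ≤ π S + (π₁ S₁ᶜ + π₂ S₂ᶜ) := by
          refine add_le_add ?_ hTc
          rw [hπ_apply S (isClosed_closure.measurableSet)]
          exact measure_mono hTS
      _ = π₁ S₁ᶜ + π₂ S₂ᶜ + π S := by ring
  -- Hausdorff part
  have hH : hausd (dInfty S) ((· ∘ Prod.fst) '' X.F) ((· ∘ Prod.snd) '' Z.F) ≤
      hausd (dInfty S₁) ((· ∘ Prod.fst) '' X.F) ((· ∘ Prod.snd) '' Y.F) +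
      hausd (dInfty S₂) ((· ∘ Prod.fst) '' Y.F) ((· ∘ Prod.snd) '' Z.F) := by
    rw [hausd_image, hausd_image, hausd_image]
    exact hausd_tri X.F Y.F Z.F
      (fun f g => dInfty S₁ (f ∘ Prod.fst) (g ∘ Prod.snd))
      (fun g h => dInfty S₂ (g ∘ Prod.fst) (h ∘ Prod.snd))
      (fun f h => dInfty S (f ∘ Prod.fst) (h ∘ Prod.snd))
      (fun f hf g hg h hh => dInfty_comp X Y Z S₁ S₂ hf hg hh)
  -- combine
  refine max_le ?_ ?_
  · exact le_trans hmeas_part (add_le_add (le_max_left _ _) (le_max_left _ _))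
  · calc 2 * hausd (dInfty S) ((· ∘ Prod.fst) '' X.F) ((· ∘ Prod.snd) '' Z.F)
        ≤ 2 * (hausd (dInfty S₁) ((· ∘ Prod.fst) '' X.F) ((· ∘ Prod.snd) '' Y.F) +
            hausd (dInfty S₂) ((· ∘ Prod.fst) '' Y.F) ((· ∘ Prod.snd) '' Z.F)) :=
          mul_le_mul_right hH 2
      _ = 2 * hausd (dInfty S₁) ((· ∘ Prod.fst) '' X.F) ((· ∘ Prod.snd) '' Y.F) +
          2 * hausd (dInfty S₂) ((· ∘ Prod.fst) '' Y.F) ((· ∘ Prod.snd) '' Z.F) := mul_add 2 _ _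
      _ ≤ _ := add_le_add (le_max_right _ _) (le_max_right _ _)

end Aux

/-- The box distance satisfies the triangle inequality. -/
theorem boxDist_triangle (X Y Z : GDS) :
    boxDist X Z ≤ boxDist X Y + boxDist Y Z := by
  rw [show boxDist X Y = ⨅ (π : Measure (X.carrier × Y.carrier)) (_ : X.Coupling Y π),
        boxCoupling X Y π X.F Y.F from rfl,
      show boxDist Y Z = ⨅ (π : Measure (Y.carrier × Z.carrier)) (_ : Y.Coupling Z π),
        boxCoupling Y Z π Y.F Z.F from rfl,
      ENNReal.iInf_add]
  refine le_iInf fun π₁ => ?_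
  rw [ENNReal.iInf_add]
  refine le_iInf fun h₁ => ?_
  rw [ENNReal.add_iInf]
  refine le_iInf fun π₂ => ?_
  rw [ENNReal.add_iInf]
  refine le_iInf fun h₂ => ?_
  exact glue_le X Y Z π₁ π₂ h₁ h₂
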